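/- Let $X \in L^2$ be centred with variance $\sigma^2$, $p \in (0,1]$, and let $(S_n)$ and $(\check{S}_n)$ be the random walk and its counterbalanced version built from the same randomness. Then for every $k \geq 2$, $\mathbb{E}(\Delta\check{M}_k \cdot X_k \mid \mathcal{F}_{k-1}) = \check{a}_k (1-p)\sigma^2$, where $\check{M}_k = \check{a}_k\check{S}_k$. In particular, when $p = 1$ this conditional covariance vanishes. -/

import Mathlib

open MeasureTheory ProbabilityTheory Filter Finset

/-- `ǎₙ = ∏_{k=1}^{n-1} k/(k-p) = Γ(n)/Γ(n-p)` (normalised so that `ǎ₁ = 1`). -/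
noncomputable def checka (p : ℝ) (n : ℕ) : ℝ :=
  ∏ k ∈ Finset.Ico 1 n, (k : ℝ) / ((k : ℝ) - p)

private lemma integrable_mul_of_L2' {Ω : Type*} {mΩ : MeasurableSpace Ω} {P : Measure Ω}
    {f g : Ω → ℝ} (hf : MemLp f 2 P) (hg : MemLp g 2 P) :
    Integrable (fun ω => f ω * g ω) P := by
  have h : MemLp (f • g) 1 P := hg.smul hf
  exact (memLp_one_iff_integrable.mp h)

/-- for the random walk and its counterbalanced version built from
the same randomness, for every `k ≥ 2`,
`E(ΔM̌ₖ · Xₖ | ℱ_{k-1}) = ǎₖ (1-p) σ²`, where `M̌ₖ = ǎₖ Šₖ`.  In particular, when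
`p = 1` this conditional covariance vanishes. -/
theorem counterbalanced_predictable_covariation_with_walk
    {Ω : Type*} {mΩ : MeasurableSpace Ω} (P : Measure Ω) [IsProbabilityMeasure P]
    (ℱ : Filtration ℕ mΩ)
    (p σ : ℝ) (hp : p ∈ Set.Ioc (0 : ℝ) 1)
    (X checkX : ℕ → Ω → ℝ) (ε : ℕ → Ω → Bool) (U : ℕ → Ω → ℕ)
    (hXL2 : ∀ k, MemLp (X k) 2 P) (hcheckL2 : ∀ k, MemLp (checkX k) 2 P)
    (hXmeas : ∀ k, Measurable (X k)) (hεmeas : ∀ k, Measurable (ε k))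
    (hUmeas : ∀ k, Measurable (U k))
    (hadapt : StronglyAdapted ℱ checkX)
    -- `X̂ₖ = Xₖ 1_{εₖ=0} + X̂_{U[k-1]} 1_{εₖ=1}`, with `U[k-1]` uniform on `{1,…,k-1}`
    (hdef : ∀ k : ℕ, 2 ≤ k → ∀ ω, checkX k ω =
      if ε k ω = true then -(checkX (U (k - 1) ω) ω) else X k ω)
    (hUrange : ∀ k : ℕ, 2 ≤ k → ∀ ω, U (k - 1) ω ∈ Finset.Icc 1 (k - 1))
    -- `(εₖ, U[k-1], Xₖ)` is independent of `ℱ_{k-1}`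
    (hindep : ∀ k : ℕ, 2 ≤ k → Indep
      (MeasurableSpace.comap (fun ω => (ε k ω, U (k - 1) ω, X k ω)) inferInstance)
      (ℱ (k - 1)) P)
    -- `(εₖ, U[k-1])` is independent of `Xₖ`
    (hindep' : ∀ k : ℕ, 2 ≤ k →
      IndepFun (fun ω => (ε k ω, U (k - 1) ω)) (X k) P)
    -- `εₖ` is Bernoulli(`p`), `U[k-1]` uniform, mutually independent
    (hlaw : ∀ k : ℕ, 2 ≤ k → ∀ j ∈ Finset.Icc 1 (k - 1),
      P {ω | ε k ω = true ∧ U (k - 1) ω = j} = ENNReal.ofReal (p / (k - 1 : ℕ)))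
    (hlaw' : ∀ k : ℕ, 2 ≤ k → P {ω | ε k ω = false} = ENNReal.ofReal (1 - p))
    -- the steps are centred with variance `σ²`
    (hXcent : ∀ k, ∫ ω, X k ω ∂P = 0)
    (hXvar : ∀ k, ∫ ω, (X k ω) ^ 2 ∂P = σ ^ 2) :
    (∀ k : ℕ, 2 ≤ k →
      P[fun ω =>
          (checka p k * ∑ j ∈ Finset.Icc 1 k, checkX j ω
            - checka p (k - 1) * ∑ j ∈ Finset.Icc 1 (k - 1), checkX j ω) * X k ω
        | ℱ (k - 1)]
        =ᵐ[P] fun _ => checka p k * (1 - p) * σ ^ 2)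
    ∧ (p = 1 →
      ∀ k : ℕ, 2 ≤ k →
        P[fun ω =>
            (checka p k * ∑ j ∈ Finset.Icc 1 k, checkX j ω
              - checka p (k - 1) * ∑ j ∈ Finset.Icc 1 (k - 1), checkX j ω) * X k ω
          | ℱ (k - 1)]
          =ᵐ[P] fun _ => 0) := by
  have key : ∀ k : ℕ, 2 ≤ k →
      P[fun ω =>
          (checka p k * ∑ j ∈ Finset.Icc 1 k, checkX j ω
            - checka p (k - 1) * ∑ j ∈ Finset.Icc 1 (k - 1), checkX j ω) * X k ω
        | ℱ (k - 1)]
        =ᵐ[P] fun _ => checka p k * (1 - p) * σ ^ 2 := by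
    intro k hk
    have hk1 : k - 1 + 1 = k := by omega
    set a : ℝ := checka p k with ha_def
    set a' : ℝ := checka p (k - 1) with ha'_def
    have hle₂ : (ℱ (k - 1) : MeasurableSpace Ω) ≤ mΩ := ℱ.le _
    haveI : SigmaFinite (P.trim hle₂) := inferInstance
    have hTmeas : Measurable (fun ω => (ε k ω, U (k - 1) ω, X k ω) : Ω → Bool × ℕ × ℝ) :=
      (hεmeas k).prodMk ((hUmeas _).prodMk (hXmeas k))
    have hle₁ : MeasurableSpace.comap
        (fun ω => (ε k ω, U (k - 1) ω, X k ω) : Ω → Bool × ℕ × ℝ) inferInstance ≤ mΩ :=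
      hTmeas.comap_le
    have hTm₁ : Measurable[MeasurableSpace.comap
        (fun ω => (ε k ω, U (k - 1) ω, X k ω) : Ω → Bool × ℕ × ℝ) inferInstance]
        (fun ω => (ε k ω, U (k - 1) ω, X k ω) : Ω → Bool × ℕ × ℝ) :=
      Measurable.of_comap_le le_rfl
    have hIndep := hindep k hk
    -- building blocks
    set e : Ω → ℝ := fun ω => if ε k ω = false then 1 else 0 with he
    set g : ℕ → Ω → ℝ :=
      fun j ω => if ε k ω = true ∧ U (k - 1) ω = j then 1 else 0 with hg
    set S : Ω → ℝ := fun ω => ∑ j ∈ Finset.Icc 1 (k - 1), checkX j ω with hSdef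
    set f₁ : Ω → ℝ := fun ω => e ω * X k ω ^ 2 with hf₁
    set f₂ : ℕ → Ω → ℝ := fun j ω => checkX j ω * (g j ω * X k ω) with hf₂
    set f₃ : Ω → ℝ := fun ω => S ω * X k ω with hf₃
    -- measurability of blocks
    have hεset : MeasurableSet {ω | ε k ω = false} :=
      (hεmeas k) (measurableSet_singleton false)
    have hemeas : Measurable e :=
      Measurable.ite hεset measurable_const measurable_const
    have hgmeas : ∀ j, Measurable (g j) := fun j =>
      Measurable.ite (((hεmeas k) (measurableSet_singleton true)).inter
        ((hUmeas (k - 1)) (measurableSet_singleton j))) measurable_const measurable_const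
    -- pointwise decomposition
    have hdecomp : (fun ω =>
        (checka p k * ∑ j ∈ Finset.Icc 1 k, checkX j ω
          - checka p (k - 1) * ∑ j ∈ Finset.Icc 1 (k - 1), checkX j ω) * X k ω)
        = a • f₁ + (∑ j ∈ Finset.Icc 1 (k - 1), (-a) • f₂ j) + (a - a') • f₃ := by
      funext ω
      have hsum : ∑ j ∈ Finset.Icc 1 k, checkX j ω
          = (∑ j ∈ Finset.Icc 1 (k - 1), checkX j ω) + checkX k ω := by
        have h := Finset.sum_Icc_succ_top (by omega : 1 ≤ k - 1 + 1)
          (fun j => checkX j ω)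
        rwa [hk1] at h
      simp only [Pi.add_apply, Pi.smul_apply, Finset.sum_apply, smul_eq_mul]
      rw [hsum, hdef k hk ω]
      by_cases hε : ε k ω = true
      · have hU := hUrange k hk ω
        rw [if_pos hε]
        have hesum : ∑ j ∈ Finset.Icc 1 (k - 1),
            -a * f₂ j ω
            = -a * (checkX (U (k - 1) ω) ω * X k ω) := by
          have hcong : ∀ j ∈ Finset.Icc 1 (k - 1),
              -a * f₂ j ω
              = if U (k - 1) ω = j then -a * (checkX j ω * X k ω) else 0 := by
            intro j _
            by_cases hUj : U (k - 1) ω = j <;> simp [hf₂, hg, hε, hUj]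
          rw [Finset.sum_congr rfl hcong, Finset.sum_ite_eq (Finset.Icc 1 (k - 1))
            (U (k - 1) ω) (fun j => -a * (checkX j ω * X k ω)), if_pos hU]
        rw [hesum]
        simp only [he, hε, hf₁, hf₃, hSdef]
        norm_num
        ring
      · rw [if_neg hε]
        have hesum : ∑ j ∈ Finset.Icc 1 (k - 1), -a * f₂ j ω = 0 := by
          refine Finset.sum_eq_zero fun j _ => ?_
          simp [hf₂, hg, hε]
        rw [hesum]
        simp only [he, hε, hf₁, hf₃, hSdef]
        norm_num
        ring
    -- integrability
    have hX2int : Integrable (fun ω => X k ω ^ 2) P := (hXL2 k).integrable_sq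
    have hf₁int : Integrable f₁ P := by
      refine hX2int.mono' (hemeas.mul ((hXmeas k).pow_const 2)).aestronglyMeasurable
        (ae_of_all _ fun ω => ?_)
      by_cases h : ε k ω = false <;>
        simp [hf₁, he, h, abs_of_nonneg (sq_nonneg (X k ω)), sq_nonneg]
    have hgXL2 : ∀ j, MemLp (fun ω => g j ω * X k ω) 2 P := fun j => by
      refine (hXL2 k).of_le ((hgmeas j).mul (hXmeas k)).aestronglyMeasurable
        (ae_of_all _ fun ω => ?_)
      by_cases h : ε k ω = true ∧ U (k - 1) ω = j <;> simp [hg, h]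
    have hf₂int : ∀ j, Integrable (f₂ j) P := fun j =>
      integrable_mul_of_L2' (hcheckL2 j) (hgXL2 j)
    have hSL2 : MemLp S 2 P :=
      memLp_finset_sum (Finset.Icc 1 (k - 1)) fun j _ => hcheckL2 j
    have hf₃int : Integrable f₃ P := integrable_mul_of_L2' hSL2 (hXL2 k)
    -- conditional expectations of the blocks
    have h₁ : P[f₁|ℱ (k - 1)] =ᵐ[P] fun _ => (1 - p) * σ ^ 2 := by
      have hφ : Measurable (fun q : Bool × ℕ × ℝ =>
          (if q.1 = false then (1 : ℝ) else 0) * q.2.2 ^ 2) := by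
        refine Measurable.mul ?_ (measurable_snd.snd.pow_const 2)
        exact Measurable.ite (measurable_fst (measurableSet_singleton false))
          measurable_const measurable_const
      have hsm : StronglyMeasurable[MeasurableSpace.comap
          (fun ω => (ε k ω, U (k - 1) ω, X k ω) : Ω → Bool × ℕ × ℝ) inferInstance] f₁ :=
        (hφ.comp hTm₁).stronglyMeasurable
      refine (condExp_indep_eq hle₁ hle₂ hsm hIndep).trans ?_
      have hind_e : IndepFun e (fun ω => X k ω ^ 2) P := by
        have hφ1 : Measurable (fun q : Bool × ℕ => if q.1 = false then (1 : ℝ) else 0) :=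
          Measurable.ite (measurable_fst (measurableSet_singleton false))
            measurable_const measurable_const
        have hφ2 : Measurable (fun x : ℝ => x ^ 2) := measurable_id.pow_const 2
        exact (hindep' k hk).comp hφ1 hφ2
      have hint : ∫ ω, f₁ ω ∂P = (∫ ω, e ω ∂P) * σ ^ 2 := by
        rw [← hXvar k]
        exact hind_e.integral_mul_eq_mul_integral hemeas.aestronglyMeasurable
          ((hXmeas k).pow_const 2).aestronglyMeasurable
      have he_int : ∫ ω, e ω ∂P = 1 - p := by
        have heind : e = Set.indicator {ω | ε k ω = false} (fun _ => (1 : ℝ)) := by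
          funext ω
          by_cases h : ε k ω = false <;> simp [he, h, Set.indicator]
        rw [heind, integral_indicator_const _ hεset, measureReal_def, hlaw' k hk,
          ENNReal.toReal_ofReal (by linarith [hp.2] : (0:ℝ) ≤ 1 - p), smul_eq_mul, mul_one]
      rw [show ∫ ω, f₁ ω ∂P = (1 - p) * σ ^ 2 by rw [hint, he_int]]
    have h₂ : ∀ j ∈ Finset.Icc 1 (k - 1), P[f₂ j|ℱ (k - 1)] =ᵐ[P] fun _ => (0 : ℝ) := by
      intro j hj
      have hjle : j ≤ k - 1 := (Finset.mem_Icc.mp hj).2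
      have hXj_sm : StronglyMeasurable[ℱ (k - 1)] (checkX j) := (hadapt j).mono (ℱ.mono hjle)
      have hpull : P[f₂ j|ℱ (k - 1)] =ᵐ[P]
          checkX j * P[(fun ω => g j ω * X k ω)|ℱ (k - 1)] := by
        have := condExp_mul_of_stronglyMeasurable_left hXj_sm
          (show Integrable (checkX j * fun ω => g j ω * X k ω) P from hf₂int j)
          ((hgXL2 j).integrable one_le_two)
        exact this
      have hφ : Measurable (fun q : Bool × ℕ × ℝ =>
          (if q.1 = true ∧ q.2.1 = j then (1 : ℝ) else 0) * q.2.2) := by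
        refine Measurable.mul ?_ measurable_snd.snd
        refine Measurable.ite ?_ measurable_const measurable_const
        exact ((measurable_fst (measurableSet_singleton true)).inter
          ((measurable_fst.comp measurable_snd) (measurableSet_singleton j)))
      have hsm : StronglyMeasurable[MeasurableSpace.comap
          (fun ω => (ε k ω, U (k - 1) ω, X k ω) : Ω → Bool × ℕ × ℝ) inferInstance]
          (fun ω => g j ω * X k ω) :=
        (hφ.comp hTm₁).stronglyMeasurable
      have hcond : P[(fun ω => g j ω * X k ω)|ℱ (k - 1)] =ᵐ[P]
          fun _ => ∫ ω, g j ω * X k ω ∂P :=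
        condExp_indep_eq hle₁ hle₂ hsm hIndep
      have hzero : ∫ ω, g j ω * X k ω ∂P = 0 := by
        have hind : IndepFun (g j) (X k) P := by
          have hφ1 : Measurable
              (fun q : Bool × ℕ => if q.1 = true ∧ q.2 = j then (1 : ℝ) else 0) :=
            Measurable.ite ((measurable_fst (measurableSet_singleton true)).inter
              (measurable_snd (measurableSet_singleton j))) measurable_const
              measurable_const
          have hφ2 : Measurable (fun x : ℝ => x) := measurable_id
          exact (hindep' k hk).comp hφ1 hφ2
        rw [show (∫ ω, g j ω * X k ω ∂P) = (∫ ω, g j ω ∂P) * ∫ ω, X k ω ∂P from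
          hind.integral_mul_eq_mul_integral (hgmeas j).aestronglyMeasurable
          (hXmeas k).aestronglyMeasurable, hXcent k, mul_zero]
      refine hpull.trans ?_
      filter_upwards [hcond] with ω hω
      simp [hω, hzero]
    have h₃ : P[f₃|ℱ (k - 1)] =ᵐ[P] fun _ => (0 : ℝ) := by
      have hS_sm : StronglyMeasurable[ℱ (k - 1)] S := by
        have hms : Measurable[ℱ (k - 1)] fun ω => ∑ j ∈ Finset.Icc 1 (k - 1), checkX j ω :=
          Finset.measurable_sum _ fun j hj =>
            ((hadapt j).mono (ℱ.mono (Finset.mem_Icc.mp hj).2)).measurable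
        exact hms.stronglyMeasurable
      have hpull : P[f₃|ℱ (k - 1)] =ᵐ[P] S * P[X k|ℱ (k - 1)] := by
        have := condExp_mul_of_stronglyMeasurable_left hS_sm
          (show Integrable (S * X k) P from hf₃int)
          ((hXL2 k).integrable one_le_two)
        exact this
      have hsm : StronglyMeasurable[MeasurableSpace.comap
          (fun ω => (ε k ω, U (k - 1) ω, X k ω) : Ω → Bool × ℕ × ℝ) inferInstance] (X k) := by
        have hms : Measurable[MeasurableSpace.comap
            (fun ω => (ε k ω, U (k - 1) ω, X k ω) : Ω → Bool × ℕ × ℝ) inferInstance]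
            ((fun q : Bool × ℕ × ℝ => q.2.2) ∘
              (fun ω => (ε k ω, U (k - 1) ω, X k ω))) :=
          Measurable.comp measurable_snd.snd hTm₁
        exact hms.stronglyMeasurable
      have hcond : P[X k|ℱ (k - 1)] =ᵐ[P] fun _ => ∫ ω, X k ω ∂P :=
        condExp_indep_eq hle₁ hle₂ hsm hIndep
      refine hpull.trans ?_
      filter_upwards [hcond] with ω hω
      simp [hω, hXcent k]
    -- assemble
    have hAint : Integrable (a • f₁) P := hf₁int.smul a
    have hBint : Integrable (∑ j ∈ Finset.Icc 1 (k - 1), (-a) • f₂ j) P :=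
      integrable_finset_sum' _ fun j _ => (hf₂int j).smul (-a)
    have hCint : Integrable ((a - a') • f₃) P := hf₃int.smul (a - a')
    have hA : P[a • f₁|ℱ (k - 1)] =ᵐ[P] fun _ => a * ((1 - p) * σ ^ 2) := by
      refine (condExp_smul a f₁ (ℱ (k - 1))).trans ?_
      filter_upwards [h₁] with ω hω
      simp [hω]
    have hB : P[∑ j ∈ Finset.Icc 1 (k - 1), (-a) • f₂ j|ℱ (k - 1)]
        =ᵐ[P] fun _ => (0 : ℝ) := by
      refine (condExp_finset_sum (fun j _ => (hf₂int j).smul (-a)) (ℱ (k - 1))).trans ?_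
      have h₂' : ∀ᵐ ω ∂P, ∀ j, j ∈ Finset.Icc 1 (k - 1) →
          (P[(-a) • f₂ j|ℱ (k - 1)]) ω = 0 := by
        rw [ae_all_iff]
        intro j
        by_cases hj : j ∈ Finset.Icc 1 (k - 1)
        · filter_upwards [h₂ j hj, condExp_smul (μ := P) (m := ℱ (k - 1)) (-a) (f₂ j)]
            with ω h1 h2
          intro _
          rw [h2]
          simp [h1]
        · exact Eventually.of_forall fun ω h => absurd h hj
      filter_upwards [h₂'] with ω hω
      simp only [Finset.sum_apply]
      exact Finset.sum_eq_zero hω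
    have hC : P[(a - a') • f₃|ℱ (k - 1)] =ᵐ[P] fun _ => (0 : ℝ) := by
      refine (condExp_smul (a - a') f₃ (ℱ (k - 1))).trans ?_
      filter_upwards [h₃] with ω hω
      simp [hω]
    rw [hdecomp]
    have step1 := condExp_add (μ := P) (m := ℱ (k - 1)) (hAint.add hBint) hCint
    have step2 := condExp_add (μ := P) (m := ℱ (k - 1)) hAint hBint
    filter_upwards [step1, step2, hA, hB, hC] with ω e1 e2 eA eB eC
    simp only [Pi.add_apply] at e1 e2
    rw [e1, e2, eA, eB, eC]
    ring
  refine ⟨key, ?_⟩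
  intro hp1 k hk
  subst hp1
  simpa using key k hk
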